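/- Let (Y,∧) be a semilattice, (X_α)_{α∈Y} a family of nonempty sets, and for each α ∈ Y let F_α : X_α^n → X_α be the n-ary extension of an abelian group operation *_α on X_α whose exponent divides n−1. Suppose that for all α, β ∈ Y with α ≥ β there is a map φ_{α,β} : X_α → X_β such that φ_{α,α} is the identity, φ_{β,γ} ∘ φ_{α,β} = φ_{α,γ} whenever α ≥ β ≥ γ, and each φ_{α,β} is a homomorphism of n-ary semigroups. Define F on the disjoint union X = ⨆_{α∈Y} X_α by F(x₁,…,xₙ) = F_α(φ_{α₁,α}(x₁),…,φ_{αₙ,α}(xₙ)) for x_i ∈ X_{α_i} and α = α₁ ∧ ⋯ ∧ αₙ. Then F is associative, symmetric and idempotent; that is, (X,F) is a symmetric n-ary band. -/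

import Mathlib

namespace NaryBand

variable {X : Type*}

/-- Replace the window of length `n` starting at position `i` (0-based) of the
`(2*n-1)`-tuple `x` by the value of `F` on that window. -/
def contract {n : ℕ} (F : (Fin n → X) → X) (i : ℕ) (hn : 2 ≤ n) (hi : i ≤ n - 1)
    (x : Fin (2 * n - 1) → X) : Fin n → X :=
  fun j =>
    if _h1 : (j : ℕ) < i then x ⟨(j : ℕ), by have := j.isLt; omega⟩
    else if _h2 : (j : ℕ) = i then
      F (fun k => x ⟨i + (k : ℕ), by have := k.isLt; omega⟩)
    else x ⟨(j : ℕ) + n - 1, by have := j.isLt; omega⟩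

/-- `F` is an associative `n`-ary operation. -/
def NAssoc {n : ℕ} (hn : 2 ≤ n) (F : (Fin n → X) → X) : Prop :=
  ∀ (i : ℕ) (hi : i + 1 ≤ n - 1) (x : Fin (2 * n - 1) → X),
    F (contract F i hn (by omega) x) = F (contract F (i + 1) hn (by omega) x)

/-- `F` is a symmetric `n`-ary operation. -/
def NSym {n : ℕ} (F : (Fin n → X) → X) : Prop :=
  ∀ (σ : Equiv.Perm (Fin n)) (x : Fin n → X), F (x ∘ σ) = F x

/-- `F` is an idempotent `n`-ary operation. -/
def NIdem {n : ℕ} (F : (Fin n → X) → X) : Prop :=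
  ∀ x : X, F (fun _ => x) = x

/-- The associated binary operation `B(x,y) = F(x,…,x,y)` (with `n-1` copies of `x`). -/
def assocB {n : ℕ} (F : (Fin n → X) → X) (x y : X) : X :=
  F (fun j => if (j : ℕ) < n - 1 then x else y)

/-- The map `ℓ_x : y ↦ B(x,y)`. -/
def ell {n : ℕ} (F : (Fin n → X) → X) (x : X) : X → X :=
  fun y => assocB F x y

/-- The `n`-ary extension `G^{n-1}(x₁,…,xₙ) = G(x₁, G(x₂, …, G(x_{n-1}, xₙ)…))`
of a binary operation `G`. -/
def nExt {n : ℕ} (hn : 1 ≤ n) (G : X → X → X) (x : Fin n → X) : X :=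
  (List.ofFn (fun i : Fin (n - 1) => x ⟨(i : ℕ), by have := i.isLt; omega⟩)).foldr G
    (x ⟨n - 1, by omega⟩)

/-- The relation `σ`: `x σ y` iff `B(x,y) = y` and `B(y,x) = x`. -/
def sigmaRel {n : ℕ} (F : (Fin n → X) → X) (x y : X) : Prop :=
  assocB F x y = y ∧ assocB F y x = x

/-- `(A, mul)` is an abelian group with identity `e` and inversion `inv`. -/
def IsAbelianGroup {A : Type*} (mul : A → A → A) (e : A) (inv : A → A) : Prop :=
  (∀ a b c, mul (mul a b) c = mul a (mul b c)) ∧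
  (∀ a b, mul a b = mul b a) ∧
  (∀ a, mul e a = a) ∧
  (∀ a, mul (inv a) a = e)

/-- `k`-fold product `a * ⋯ * a` with respect to `mul` (with `powMul mul e 0 a = e`). -/
def powMul {A : Type*} (mul : A → A → A) (e : A) : ℕ → A → A
  | 0, _ => e
  | k + 1, a => mul a (powMul mul e k a)

end NaryBand

open NaryBand

open Finset in
section
section Aux

variable {A M Y : Type*}

def optMul (G : A → A → A) : Option A → Option A → Option A
  | none, y => y
  | some a, none => some a
  | some a, some b => some (G a b)

def optMonoid (G : A → A → A) (h1 : ∀ a b c, G (G a b) c = G a (G b c))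
    (h2 : ∀ a b, G a b = G b a) : CommMonoid (Option A) where
  mul := optMul G
  one := none
  mul_assoc a b c := by
    cases a <;> cases b <;> cases c <;> first | rfl | exact congrArg some (h1 _ _ _)
  one_mul a := by cases a <;> rfl
  mul_one a := by cases a <;> rfl
  mul_comm a b := by
    cases a <;> cases b <;> first | rfl | exact congrArg some (h2 _ _)

theorem some_foldr [CommMonoid (Option A)] (G : A → A → A)
    (hms : ∀ a b : A, (some a * some b : Option A) = some (G a b)) :
    ∀ (l : List A) (b : A), (some (l.foldr G b) : Option A) = (l.map some).prod * some b
  | [], b => by simp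
  | a :: l, b => by
      rw [List.foldr_cons, ← hms, some_foldr G hms l b, List.map_cons, List.prod_cons, mul_assoc]

theorem fin_prod_eq_range [CommMonoid M] {N : ℕ} (t : Fin N → M) (f : ℕ → M)
    (h : ∀ j : Fin N, t j = f j) : ∏ j, t j = ∏ j ∈ range N, f j := by
  calc ∏ j, t j = ∏ j : Fin N, f ↑j := Finset.prod_congr rfl (fun j _ => h j)
    _ = ∏ j ∈ range N, f j := Fin.prod_univ_eq_prod_range f N

theorem some_nExt [CommMonoid (Option A)] (G : A → A → A)
    (hms : ∀ a b : A, (some a * some b : Option A) = some (G a b))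
    {n : ℕ} (hn : 1 ≤ n) (x : Fin n → A) :
    (some (nExt hn G x) : Option A) = ∏ i : Fin n, (some (x i) : Option A) := by
  obtain ⟨m, rfl⟩ : ∃ m, n = m + 1 := ⟨n - 1, by omega⟩
  unfold nExt
  rw [some_foldr G hms, List.map_ofFn, List.prod_ofFn,
    Fin.prod_univ_castSucc (f := fun i : Fin (m + 1) => (some (x i) : Option A))]
  rfl

theorem prod_range_add' [CommMonoid M] (f : ℕ → M) (a b c : ℕ) (h : a = b + c) :
    ∏ j ∈ range a, f j = (∏ j ∈ range b, f j) * ∏ j ∈ range c, f (b + j) := by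
  subst h; exact Finset.prod_range_add f b c

theorem prod_contract_range [CommMonoid M] (n i : ℕ) (hn : 2 ≤ n) (hi : i ≤ n - 1) (g : ℕ → M) :
    (∏ j ∈ range n,
      (if j < i then g j else if j = i then (∏ k ∈ range n, g (i + k)) else g (j + n - 1)))
      = ∏ j ∈ range (2 * n - 1), g j := by
  set f : ℕ → M := fun j =>
    if j < i then g j else if j = i then (∏ k ∈ range n, g (i + k)) else g (j + n - 1) with hf
  rw [prod_range_add' f n i (1 + (n - 1 - i)) (by omega),
      prod_range_add' (fun j => f (i + j)) (1 + (n - 1 - i)) 1 (n - 1 - i) rfl,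
      prod_range_add' g (2 * n - 1) i (n + (n - 1 - i)) (by omega),
      prod_range_add' (fun j => g (i + j)) (n + (n - 1 - i)) n (n - 1 - i) rfl]
  congr 1
  · apply Finset.prod_congr rfl
    intro j hj
    have : j < i := Finset.mem_range.mp hj
    simp [hf, this]
  congr 1
  · rw [Finset.prod_range_one]
    simp [hf]
  · apply Finset.prod_congr rfl
    intro j hj
    have h1 : ¬ (i + (1 + j) < i) := by omega
    have h2 : ¬ (i + (1 + j) = i) := by omega
    simp only [hf, h1, h2, if_false]
    congr 1
    omega

end Aux

section Meet

variable {Y : Type*} (meet : Y → Y → Y)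
variable (ha : ∀ a b c, meet (meet a b) c = meet a (meet b c))
variable (hc : ∀ a b, meet a b = meet b a)
variable (hidem : ∀ a, meet a a = a)

include ha hc hidem in
theorem foldr_meet_le :
    ∀ (l : List Y) (b : Y),
      meet b (l.foldr meet b) = l.foldr meet b ∧
      ∀ a ∈ l, meet a (l.foldr meet b) = l.foldr meet b := by
  intro l
  induction l with
  | nil => intro b; exact ⟨hidem b, by simp⟩
  | cons a l ih =>
      intro b
      obtain ⟨h1, h2⟩ := ih b
      refine ⟨?_, ?_⟩
      · show meet b (meet a (l.foldr meet b)) = meet a (l.foldr meet b)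
        rw [← ha, hc b a, ha, h1]
      · intro a' ha'
        rcases List.mem_cons.mp ha' with rfl | hmem
        · show meet a' (meet a' (l.foldr meet b)) = meet a' (l.foldr meet b)
          rw [← ha, hidem]
        · show meet a' (meet a (l.foldr meet b)) = meet a (l.foldr meet b)
          rw [← ha, hc a' a, ha, h2 a' hmem]

include ha in
theorem foldr_meet_ge :
    ∀ (l : List Y) (b c : Y), meet c b = c → (∀ a ∈ l, meet c a = c) →
      meet c (l.foldr meet b) = c := by
  intro l
  induction l with
  | nil => intro b c h _; exact h
  | cons a l ih =>
      intro b c h hall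
      show meet c (meet a (l.foldr meet b)) = c
      rw [← ha, hall a List.mem_cons_self, ih b c h (fun a' h' => hall a' (List.mem_cons_of_mem a h'))]

include ha hc hidem in
theorem nExt_meet_le {N : ℕ} (hN : 1 ≤ N) (xs : Fin N → Y) (i : Fin N) :
    meet (xs i) (nExt hN meet xs) = nExt hN meet xs := by
  obtain ⟨h1, h2⟩ := foldr_meet_le meet ha hc hidem
    (List.ofFn (fun k : Fin (N - 1) => xs ⟨(k : ℕ), by have := k.isLt; omega⟩))
    (xs ⟨N - 1, by omega⟩)
  by_cases h : (i : ℕ) = N - 1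
  · have hi : i = ⟨N - 1, by omega⟩ := Fin.ext h
    rw [hi]
    exact h1
  · refine h2 (xs i) ?_
    rw [List.mem_ofFn]
    exact ⟨⟨(i : ℕ), by have := i.isLt; omega⟩, rfl⟩

include ha in
theorem nExt_meet_ge {N : ℕ} (hN : 1 ≤ N) (xs : Fin N → Y) (c : Y)
    (h : ∀ i, meet c (xs i) = c) : meet c (nExt hN meet xs) = c := by
  refine foldr_meet_ge meet ha _ _ c (h _) ?_
  intro a haa
  rw [List.mem_ofFn] at haa
  obtain ⟨k, rfl⟩ := haa
  exact h _

end Meet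

theorem foldr_replicate {A : Type*} (mul : A → A → A) (e : A)
    (ha : ∀ a b c, mul (mul a b) c = mul a (mul b c))
    (hl : ∀ a, mul e a = a) :
    ∀ (k : ℕ) (a b : A), (List.replicate k a).foldr mul b = mul (powMul mul e k a) b := by
  intro k
  induction k with
  | zero => intro a b; exact (hl b).symm
  | succ k ih =>
      intro a b
      show mul a ((List.replicate k a).foldr mul b) = mul (mul a (powMul mul e k a)) b
      rw [ih, ha]

end

theorem stmt_15 {Y : Type*} {Xf : Y → Type*} {n : ℕ} (hn : 2 ≤ n)
    (meet : Y → Y → Y)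
    (hassoc : ∀ a b c, meet (meet a b) c = meet a (meet b c))
    (hcomm : ∀ a b, meet a b = meet b a)
    (hidem : ∀ a, meet a a = a)
    (hne : ∀ α, Nonempty (Xf α))
    (mulA : ∀ α, Xf α → Xf α → Xf α) (eA : ∀ α, Xf α) (invA : ∀ α, Xf α → Xf α)
    (hgrp : ∀ α, IsAbelianGroup (mulA α) (eA α) (invA α))
    (hexp : ∀ α (a : Xf α), powMul (mulA α) (eA α) (n - 1) a = eA α)
    (Fa : ∀ α, (Fin n → Xf α) → Xf α)
    (hFaDef : ∀ α, Fa α = nExt (show 1 ≤ n by omega) (mulA α))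
    (φ : ∀ α β, Xf α → Xf β)
    (hid : ∀ α, φ α α = id)
    (hcomp : ∀ α β γ, meet α β = β → meet β γ = γ → φ β γ ∘ φ α β = φ α γ)
    (hhom : ∀ α β, meet α β = β → ∀ xs : Fin n → Xf α,
      φ α β (Fa α xs) = Fa β (fun i => φ α β (xs i)))
    (F : (Fin n → Σ α, Xf α) → Σ α, Xf α)
    (hFdef : ∀ xs : Fin n → Σ α, Xf α,
      F xs = ⟨nExt (show 1 ≤ n by omega) meet (fun i => (xs i).1),
        Fa _ (fun i => φ (xs i).1 _ (xs i).2)⟩) :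
    NAssoc hn F ∧ NSym F ∧ NIdem F := by
  have hNE : (1:ℕ) ≤ n := by omega
  have hNE2 : (1:ℕ) ≤ 2*n-1 := by omega
  letI : CommMonoid (Option Y) := optMonoid meet hassoc hcomm
  have hmsY : ∀ a b : Y, (some a * some b : Option Y) = some (meet a b) := fun _ _ => rfl
  have hF' : ∀ (xs : Fin n → Σ α, Xf α) (ν : Y),
      nExt hNE meet (fun i => (xs i).1) = ν →
      F xs = ⟨ν, Fa ν (fun j => φ (xs j).1 ν ((xs j).2))⟩ := by
    intro xs ν h
    rw [hFdef]
    subst h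
    rfl
  refine ⟨?_, ?_, ?_⟩
  · -- NAssoc
    intro i₀ hi₀ x
    set μ := nExt hNE2 meet (fun m => (x m).1) with hμdef
    letI : CommMonoid (Option (Xf μ)) := optMonoid (mulA μ) (hgrp μ).1 (hgrp μ).2.1
    have hmsX : ∀ a b : Xf μ, (some a * some b : Option (Xf μ)) = some (mulA μ a b) :=
      fun _ _ => rfl
    set gY : ℕ → Option Y :=
      (fun m => if h : m < 2*n-1 then some ((x ⟨m, h⟩).1) else 1) with hgY
    set gX : ℕ → Option (Xf μ) :=
      (fun m => if h : m < 2*n-1 then some (φ (x ⟨m, h⟩).1 μ ((x ⟨m, h⟩).2)) else 1) with hgX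
    have hsomeμ : (some μ : Option Y) = ∏ m ∈ Finset.range (2*n-1), gY m := by
      rw [hμdef, some_nExt meet hmsY]
      refine fin_prod_eq_range _ gY ?_
      intro j
      simp only [hgY]
      rw [dif_pos j.isLt]
    have key : ∀ (i : ℕ) (hi' : i ≤ n - 1),
        ∃ S : Xf μ, F (contract F i hn hi' x) = ⟨μ, S⟩ ∧
          (some S : Option (Xf μ)) = ∏ m ∈ Finset.range (2*n-1), gX m := by
      intro i hi'
      have hwin : ∀ k : Fin n, i + (k:ℕ) < 2*n-1 := fun k => by have := k.isLt; omega
      set w : Fin n → Y := (fun k => (x ⟨i + (k:ℕ), hwin k⟩).1) with hw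
      set β := nExt hNE meet w with hβ
      have hwβ : ∀ k, meet (w k) β = β :=
        fun k => nExt_meet_le meet hassoc hcomm hidem hNE w k
      have hμw : ∀ k, meet μ (w k) = μ := by
        intro k
        have h := nExt_meet_le meet hassoc hcomm hidem hNE2 (fun m => (x m).1)
          ⟨i + (k:ℕ), hwin k⟩
        rw [hcomm]
        exact h
      have hβμ : meet β μ = μ := by
        rw [hcomm]
        exact nExt_meet_ge meet hassoc hNE w μ hμw
      set c := contract F i hn hi' x with hcdef
      have hc1 : ∀ j : Fin n, ∀ h : (j:ℕ) < i,
          c j = x ⟨(j:ℕ), by have := j.isLt; omega⟩ := by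
        intro j h; rw [hcdef]; unfold contract; rw [dif_pos h]
      have hc3 : ∀ j : Fin n, i < (j:ℕ) →
          c j = x ⟨(j:ℕ) + n - 1, by have := j.isLt; omega⟩ := by
        intro j h; rw [hcdef]; unfold contract; rw [dif_neg (by omega), dif_neg (by omega)]
      have hc2 : ∀ j : Fin n, (j:ℕ) = i →
          c j = ⟨β, Fa β (fun k => φ (x ⟨i + (k:ℕ), hwin k⟩).1 β ((x ⟨i + (k:ℕ), hwin k⟩).2))⟩ := by
        intro j h
        rw [hcdef]; unfold contract
        rw [dif_neg (by omega), dif_pos h, hFdef]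
      have hM : nExt hNE meet (fun j => ((c j).1)) = μ := by
        apply Option.some_injective
        rw [some_nExt meet hmsY, hsomeμ]
        refine (fin_prod_eq_range _
          (fun m => if m < i then gY m else if m = i then (∏ k ∈ Finset.range n, gY (i + k))
            else gY (m + n - 1)) ?_).trans (prod_contract_range n i hn hi' gY)
        intro j
        beta_reduce
        by_cases h1 : (j:ℕ) < i
        · rw [hc1 j h1, if_pos h1]
          simp only [hgY]
          rw [dif_pos (by have := j.isLt; omega : (j:ℕ) < 2*n-1)]
        · by_cases h2 : (j:ℕ) = i
          · rw [hc2 j h2, if_neg h1, if_pos h2]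
            show (some β : Option Y) = ∏ k ∈ Finset.range n, gY (i + k)
            rw [hβ, some_nExt meet hmsY]
            refine fin_prod_eq_range _ _ ?_
            intro k
            simp only [hgY]
            rw [dif_pos (hwin k)]
          · rw [hc3 j (by omega), if_neg h1, if_neg h2]
            simp only [hgY]
            rw [dif_pos (by have := j.isLt; omega : (j:ℕ) + n - 1 < 2*n-1)]
      have hS : (some (Fa μ (fun j => φ ((c j).1) μ ((c j).2))) : Option (Xf μ))
          = ∏ m ∈ Finset.range (2*n-1), gX m := by
        rw [hFaDef, some_nExt (mulA μ) hmsX]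
        refine (fin_prod_eq_range _
          (fun m => if m < i then gX m else if m = i then (∏ k ∈ Finset.range n, gX (i + k))
            else gX (m + n - 1)) ?_).trans (prod_contract_range n i hn hi' gX)
        intro j
        beta_reduce
        by_cases h1 : (j:ℕ) < i
        · rw [hc1 j h1, if_pos h1]
          simp only [hgX]
          rw [dif_pos (by have := j.isLt; omega : (j:ℕ) < 2*n-1)]
        · by_cases h2 : (j:ℕ) = i
          · rw [hc2 j h2, if_neg h1, if_pos h2]
            show (some (φ β μ (Fa β (fun k => φ (x ⟨i + (k:ℕ), hwin k⟩).1 β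
              ((x ⟨i + (k:ℕ), hwin k⟩).2)))) : Option (Xf μ))
              = ∏ k ∈ Finset.range n, gX (i + k)
            rw [hhom β μ hβμ]
            have hfun : (fun k : Fin n => φ β μ (φ (x ⟨i + (k:ℕ), hwin k⟩).1 β
                ((x ⟨i + (k:ℕ), hwin k⟩).2)))
                = fun k : Fin n => φ (x ⟨i + (k:ℕ), hwin k⟩).1 μ ((x ⟨i + (k:ℕ), hwin k⟩).2) := by
              funext k
              exact congrFun (hcomp (x ⟨i + (k:ℕ), hwin k⟩).1 β μ (hwβ k) hβμ) _
            rw [hfun, hFaDef, some_nExt (mulA μ) hmsX]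
            refine fin_prod_eq_range _ _ ?_
            intro k
            simp only [hgX]
            rw [dif_pos (hwin k)]
          · rw [hc3 j (by omega), if_neg h1, if_neg h2]
            simp only [hgX]
            rw [dif_pos (by have := j.isLt; omega : (j:ℕ) + n - 1 < 2*n-1)]
      exact ⟨Fa μ (fun j => φ ((c j).1) μ ((c j).2)), hF' c μ hM, hS⟩
    obtain ⟨S1, hk1, hk1'⟩ := key i₀ (by omega)
    obtain ⟨S2, hk2, hk2'⟩ := key (i₀+1) (by omega)
    have hSS : S1 = S2 := Option.some_injective _ (hk1'.trans hk2'.symm)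
    rw [hSS] at hk1
    exact hk1.trans hk2.symm
  · -- NSym
    intro σ x
    set μ := nExt hNE meet (fun i => (x i).1) with hμdef
    letI : CommMonoid (Option (Xf μ)) := optMonoid (mulA μ) (hgrp μ).1 (hgrp μ).2.1
    have hmsX : ∀ a b : Xf μ, (some a * some b : Option (Xf μ)) = some (mulA μ a b) :=
      fun _ _ => rfl
    have h1 : nExt hNE meet (fun i => ((x ∘ σ) i).1) = μ := by
      apply Option.some_injective
      rw [some_nExt meet hmsY, hμdef, some_nExt meet hmsY]
      exact Equiv.prod_comp σ (fun i => (some ((x i).1) : Option Y))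
    rw [hF' (x ∘ σ) μ h1, hF' x μ hμdef.symm]
    refine congrArg (Sigma.mk μ) ?_
    apply Option.some_injective
    rw [hFaDef, some_nExt (mulA μ) hmsX, some_nExt (mulA μ) hmsX]
    exact Equiv.prod_comp σ (fun i => (some (φ (x i).1 μ ((x i).2)) : Option (Xf μ)))
  · -- NIdem
    intro x
    obtain ⟨α, b⟩ := x
    have hμα : nExt hNE meet (fun _ : Fin n => α) = α := by
      have h1 := nExt_meet_le meet hassoc hcomm hidem hNE (fun _ : Fin n => α) ⟨0, by omega⟩
      have h2 := nExt_meet_ge meet hassoc hNE (fun _ : Fin n => α) α (fun _ => hidem α)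
      exact h1.symm.trans h2
    rw [hF' (fun _ => ⟨α, b⟩) α hμα]
    refine congrArg (Sigma.mk α) ?_
    show Fa α (fun _ : Fin n => φ α α b) = b
    rw [show (fun _ : Fin n => φ α α b) = (fun _ : Fin n => b) from
      funext fun _ => by rw [hid]; rfl]
    rw [hFaDef]
    show (List.ofFn (fun _ : Fin (n-1) => b)).foldr (mulA α) b = b
    rw [List.ofFn_const, foldr_replicate (mulA α) (eA α) (hgrp α).1 (hgrp α).2.2.1,
      hexp α b, (hgrp α).2.2.1]
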